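/- Let X be a real-valued random variable with E|X| < ∞ and τ ∈ (0,1). Then the function θ ↦ E[η_τ(X−θ) − η_τ(X)], where η_τ(x) = |τ − 1{x ≤ 0}| x², has a unique minimizer ξ_τ in ℝ. -/
import Mathlib


open MeasureTheory Filter Topology


noncomputable def eta (τ y : ℝ) : ℝ := (if y ≤ 0 then (1-τ) else τ) * y^2

noncomputable def Dsl (τ θ x : ℝ) : ℝ := if x - θ ≤ 0 then 2*(1-τ)*(θ-x) else 2*τ*(θ-x)

lemma eta_eq (τ : ℝ) (h0 : 0 < τ) (h1 : τ < 1) (y : ℝ) :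
    |τ - (if y ≤ 0 then (1:ℝ) else 0)| * y^2 = eta τ y := by
  unfold eta
  split_ifs with h
  · rw [abs_of_nonpos (by linarith)]; ring
  · rw [abs_of_pos (by linarith)]; ring

lemma eta_measurable (τ : ℝ) : Measurable (eta τ) := by
  unfold eta
  exact Measurable.mul (Measurable.ite (measurableSet_le measurable_id measurable_const)
    measurable_const measurable_const) (measurable_id.pow_const 2)

lemma Dsl_measurable (τ θ : ℝ) : Measurable (fun x => Dsl τ θ x) := by
  unfold Dsl
  exact Measurable.ite (measurableSet_le (measurable_id.sub measurable_const) measurable_const)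
    (measurable_const.mul (measurable_const.sub measurable_id))
    (measurable_const.mul (measurable_const.sub measurable_id))

lemma key_ineq (τ θ ξ x : ℝ) (h0 : 0 < τ) (h1 : τ < 1) :
    eta τ (x-ξ) + Dsl τ ξ x * (θ-ξ) + min τ (1-τ) * (θ-ξ)^2 ≤ eta τ (x-θ) := by
  have hm1 : min τ (1-τ) ≤ τ := min_le_left _ _
  have hm2 : min τ (1-τ) ≤ 1-τ := min_le_right _ _
  unfold eta Dsl
  split_ifs with ha hb hb
  · nlinarith [sq_nonneg (θ-ξ), sq_nonneg (x-θ), sq_nonneg (x-ξ)]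
  · nlinarith [sq_nonneg (θ-ξ), sq_nonneg (x-θ), sq_nonneg (x-ξ),
      mul_nonneg (mul_nonneg (by linarith : (0:ℝ) ≤ 1-τ-min τ (1-τ)) (by linarith : (0:ℝ) ≤ ξ-x)) (by linarith : (0:ℝ) ≤ ξ-x + 2*(x-θ))]
  · nlinarith [sq_nonneg (θ-ξ), sq_nonneg (x-θ), sq_nonneg (x-ξ),
      mul_nonneg (mul_nonneg (by linarith : (0:ℝ) ≤ τ-min τ (1-τ)) (by linarith : (0:ℝ) ≤ x-ξ)) (by linarith : (0:ℝ) ≤ x-ξ + 2*(θ-x))]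
  · nlinarith [sq_nonneg (θ-ξ)]

lemma eta_diff_bound (τ θ y : ℝ) (h0 : 0 < τ) (h1 : τ < 1) :
    |eta τ (y-θ) - eta τ y| ≤ (2*|y| + |θ|) * |θ| := by
  have h2y : |θ - 2*y| ≤ |θ| + 2*|y| := by
    rw [sub_eq_add_neg]
    refine (abs_add_le _ _).trans ?_
    rw [abs_neg, abs_mul, abs_two]
  have habs : ∀ c : ℝ, 0 ≤ c → c ≤ 1 → |c*(y-θ)^2 - c*y^2| ≤ (2*|y|+|θ|)*|θ| := by
    intro c hc0 hc1
    rw [← mul_sub, abs_mul]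
    have he : (y-θ)^2 - y^2 = (θ - 2*y)*θ := by ring
    rw [he, abs_mul]
    calc |c| * (|θ - 2*y| * |θ|) ≤ 1 * ((|θ| + 2*|y|) * |θ|) := by
          apply mul_le_mul (by rwa [abs_of_nonneg hc0]) _ (by positivity) one_pos.le
          exact mul_le_mul_of_nonneg_right h2y (abs_nonneg θ)
      _ = (2*|y| + |θ|) * |θ| := by ring
  unfold eta
  split_ifs with ha hb hb
  · exact habs (1-τ) (by linarith) (by linarith)
  · -- θ < y ≤ ... : here y - θ ≤ 0 and 0 < y, so 0 < y ≤ θ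
    have hy : |y| = y := abs_of_pos (by linarith)
    have ht : |θ| = θ := abs_of_pos (by linarith)
    rw [hy, ht, abs_le]
    constructor <;> nlinarith [sq_nonneg (y-θ), sq_nonneg y, mul_nonneg h0.le (sq_nonneg y),
      mul_nonneg (by linarith : (0:ℝ) ≤ 1-τ) (sq_nonneg (y-θ))]
  · -- y ≤ 0 < y - θ : θ < y ≤ 0 so θ < 0
    have hy : |y| = -y := abs_of_nonpos (by linarith)
    have ht : |θ| = -θ := abs_of_neg (by linarith)
    rw [hy, ht, abs_le]
    constructor <;> nlinarith [sq_nonneg (y-θ), sq_nonneg y, mul_nonneg h0.le (sq_nonneg (y-θ)),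
      mul_nonneg (by linarith : (0:ℝ) ≤ 1-τ) (sq_nonneg y)]
  · exact habs τ (by linarith) (by linarith)

lemma Dsl_bound (τ θ x : ℝ) (h0 : 0 < τ) (h1 : τ < 1) :
    |Dsl τ θ x| ≤ 2*(|θ| + |x|) := by
  have h1' := le_abs_self θ; have h2 := neg_abs_le θ
  have h3 := le_abs_self x; have h4 := neg_abs_le x
  unfold Dsl
  rw [abs_le]
  split_ifs with ha <;> constructor <;> nlinarith

lemma Dsl_lip (τ θ θ' x : ℝ) (h0 : 0 < τ) (h1 : τ < 1) :
    |Dsl τ θ x - Dsl τ θ' x| ≤ 2*|θ - θ'| := by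
  have h1' := le_abs_self (θ-θ'); have h2 := neg_abs_le (θ-θ')
  unfold Dsl
  rw [abs_le]
  split_ifs with ha hb hb <;> constructor <;> nlinarith

lemma Dsl_strongmono (τ θ θ' x : ℝ) (h0 : 0 < τ) (h1 : τ < 1) (h : θ ≤ θ') :
    2 * min τ (1-τ) * (θ' - θ) ≤ Dsl τ θ' x - Dsl τ θ x := by
  have hm1 : min τ (1-τ) ≤ τ := min_le_left _ _
  have hm2 : min τ (1-τ) ≤ 1-τ := min_le_right _ _
  unfold Dsl
  split_ifs with ha hb hb <;> nlinarith

/-- For an integrable real random variable `X` and `τ ∈ (0,1)`, the function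
`θ ↦ E[η_τ(X−θ) − η_τ(X)]` with `η_τ(x) = |τ − 1{x ≤ 0}| x²` has a unique minimizer. -/
theorem expectile_exists_unique {Ω : Type*} [MeasurableSpace Ω] (μ : Measure Ω)
    [IsProbabilityMeasure μ] (X : Ω → ℝ) (hXmeas : Measurable X) (hX : Integrable X μ)
    (τ : ℝ) (hτ : τ ∈ Set.Ioo (0 : ℝ) 1) :
    ∃! ξ : ℝ, ∀ θ : ℝ,
      (∫ ω, (|τ - (if X ω - ξ ≤ 0 then 1 else 0)| * (X ω - ξ) ^ 2
          - |τ - (if X ω ≤ 0 then 1 else 0)| * (X ω) ^ 2) ∂μ)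
        ≤ ∫ ω, (|τ - (if X ω - θ ≤ 0 then 1 else 0)| * (X ω - θ) ^ 2
          - |τ - (if X ω ≤ 0 then 1 else 0)| * (X ω) ^ 2) ∂μ := by
  obtain ⟨hτ0, hτ1⟩ := hτ
  set m := min τ (1-τ) with hmdef
  have hm : 0 < m := lt_min hτ0 (by linarith)
  set G : ℝ → ℝ := fun ξ => ∫ ω, (eta τ (X ω - ξ) - eta τ (X ω)) ∂μ with hG
  have hmeas : ∀ ξ : ℝ, Measurable (fun ω => eta τ (X ω - ξ) - eta τ (X ω)) := fun ξ =>
    ((eta_measurable τ).comp (hXmeas.sub measurable_const)).sub ((eta_measurable τ).comp hXmeas)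
  have hint : ∀ ξ : ℝ, Integrable (fun ω => eta τ (X ω - ξ) - eta τ (X ω)) μ := by
    intro ξ
    have hb : Integrable (fun ω => (2*|X ω| + |ξ|)*|ξ|) μ :=
      ((hX.abs.const_mul 2).add (integrable_const _)).mul_const _
    refine hb.mono (hmeas ξ).aestronglyMeasurable (Filter.Eventually.of_forall fun ω => ?_)
    rw [Real.norm_eq_abs, Real.norm_eq_abs]
    exact (eta_diff_bound τ ξ (X ω) hτ0 hτ1).trans (le_abs_self _)
  have hGeq : ∀ ξ' : ℝ,
      (∫ ω, (|τ - (if X ω - ξ' ≤ 0 then 1 else 0)| * (X ω - ξ') ^ 2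
          - |τ - (if X ω ≤ 0 then 1 else 0)| * (X ω) ^ 2) ∂μ) = G ξ' := by
    intro ξ'
    refine integral_congr_ae (Filter.Eventually.of_forall fun ω => ?_)
    simp only [eta_eq τ hτ0 hτ1]
  have hDmeas : ∀ θ : ℝ, Measurable (fun ω => Dsl τ θ (X ω)) := fun θ =>
    (Dsl_measurable τ θ).comp hXmeas
  have hDint : ∀ θ : ℝ, Integrable (fun ω => Dsl τ θ (X ω)) μ := by
    intro θ
    have hb : Integrable (fun ω => 2*(|θ| + |X ω|)) μ :=
      ((integrable_const _).add hX.abs).const_mul 2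
    refine hb.mono (hDmeas θ).aestronglyMeasurable (Filter.Eventually.of_forall fun ω => ?_)
    rw [Real.norm_eq_abs]
    exact (Dsl_bound τ θ (X ω) hτ0 hτ1).trans (le_abs_self _)
  set ψ : ℝ → ℝ := fun θ => ∫ ω, Dsl τ θ (X ω) ∂μ with hψ
  have hψmono : ∀ θ θ' : ℝ, θ ≤ θ' → 2*m*(θ'-θ) ≤ ψ θ' - ψ θ := by
    intro θ θ' h
    have h1 : ψ θ' - ψ θ = ∫ ω, (Dsl τ θ' (X ω) - Dsl τ θ (X ω)) ∂μ :=
      (integral_sub (hDint θ') (hDint θ)).symm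
    have h2 : (2*m*(θ'-θ)) = ∫ _ω, (2*m*(θ'-θ)) ∂μ := by simp
    rw [h1, h2]
    exact integral_mono (integrable_const _) ((hDint θ').sub (hDint θ))
      fun ω => Dsl_strongmono τ θ θ' (X ω) hτ0 hτ1 h
  have hψlip : ∀ θ θ' : ℝ, |ψ θ - ψ θ'| ≤ 2*|θ - θ'| := by
    intro θ θ'
    rw [← integral_sub (hDint θ) (hDint θ')]
    calc |∫ ω, (Dsl τ θ (X ω) - Dsl τ θ' (X ω)) ∂μ|
        ≤ ∫ ω, |Dsl τ θ (X ω) - Dsl τ θ' (X ω)| ∂μ := by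
          simpa [Real.norm_eq_abs] using
            norm_integral_le_integral_norm (μ := μ) (fun ω => Dsl τ θ (X ω) - Dsl τ θ' (X ω))
      _ ≤ ∫ _ω, 2*|θ-θ'| ∂μ :=
          integral_mono ((hDint θ).sub (hDint θ')).abs (integrable_const _)
            (fun ω => Dsl_lip τ θ θ' (X ω) hτ0 hτ1)
      _ = 2*|θ-θ'| := by simp
  have hψcont : Continuous ψ := by
    have : LipschitzWith 2 ψ := by
      refine LipschitzWith.of_dist_le_mul fun a b => ?_
      rw [Real.dist_eq, Real.dist_eq]
      have := hψlip a b
      push_cast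
      linarith
    exact this.continuous
  obtain ⟨ξ, hξroot⟩ : ∃ ξ, ψ ξ = 0 := by
    set b := (|ψ 0| + 1)/(2*m) with hb
    have hbpos : 0 ≤ b := div_nonneg (by positivity) (by positivity)
    have hbeq : 2*m*b = |ψ 0| + 1 := by
      rw [hb]; field_simp
    have h1' : 1 ≤ ψ b := by
      have := hψmono 0 b hbpos
      have h2 := le_abs_self (ψ 0)
      have h3 := neg_abs_le (ψ 0)
      nlinarith
    have h2' : ψ (-b) ≤ -1 := by
      have := hψmono (-b) 0 (by linarith)
      have h2 := le_abs_self (ψ 0)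
      have h3 := neg_abs_le (ψ 0)
      nlinarith
    have hab : (-b : ℝ) ≤ b := by linarith
    have hiv := intermediate_value_Icc hab hψcont.continuousOn
    have h0mem : (0:ℝ) ∈ Set.Icc (ψ (-b)) (ψ b) := ⟨by linarith, by linarith⟩
    obtain ⟨ξ, _, hξ⟩ := hiv h0mem
    exact ⟨ξ, hξ⟩
  have hkey : ∀ θ : ℝ, G ξ + m*(θ-ξ)^2 ≤ G θ := by
    intro θ
    have hsub : G θ - G ξ = ∫ ω, ((eta τ (X ω - θ) - eta τ (X ω))
        - (eta τ (X ω - ξ) - eta τ (X ω))) ∂μ := (integral_sub (hint θ) (hint ξ)).symm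
    have hptwise : ∀ ω, Dsl τ ξ (X ω) * (θ-ξ) + m*(θ-ξ)^2
        ≤ (eta τ (X ω - θ) - eta τ (X ω)) - (eta τ (X ω - ξ) - eta τ (X ω)) := by
      intro ω
      have := key_ineq τ θ ξ (X ω) hτ0 hτ1
      linarith
    have hintR : Integrable (fun ω => Dsl τ ξ (X ω) * (θ-ξ) + m*(θ-ξ)^2) μ :=
      ((hDint ξ).mul_const _).add (integrable_const _)
    have hmono := integral_mono hintR ((hint θ).sub (hint ξ)) hptwise
    simp only [Pi.sub_apply] at hmono
    rw [← hsub] at hmono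
    have heval : ∫ ω, (Dsl τ ξ (X ω) * (θ-ξ) + m*(θ-ξ)^2) ∂μ
        = ψ ξ * (θ-ξ) + m*(θ-ξ)^2 := by
      rw [integral_add ((hDint ξ).mul_const _) (integrable_const _), integral_mul_const]
      simp [hψ]
    rw [heval, hξroot] at hmono
    linarith
  refine ⟨ξ, fun θ => ?_, fun ξ' hξ' => ?_⟩
  · rw [hGeq ξ, hGeq θ]
    nlinarith [hkey θ, sq_nonneg (θ-ξ), mul_nonneg hm.le (sq_nonneg (θ-ξ))]
  · have h1 := hξ' ξ
    rw [hGeq ξ', hGeq ξ] at h1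
    have h2 := hkey ξ'
    have hz : (ξ'-ξ)^2 = 0 := le_antisymm (by nlinarith [sq_nonneg (ξ'-ξ)]) (sq_nonneg _)
    have := pow_eq_zero_iff (n := 2) (by norm_num) |>.mp hz
    linarith [sub_eq_zero.mp this]
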